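/- Let m ≥ 1 and let F : ℝ^m → ℝ be C¹ and homogeneous of degree 6. Then for every integer J ≥ 1 there exists a constant C > 0 (depending on F and J) such that for all z₁, …, z_J ∈ ℝ^m, |F(z₁ + ⋯ + z_J) − (F(z₁) + ⋯ + F(z_J))| ≤ C Σ_{j ≠ k} |z_j| |z_k|^5. -/

import Mathlib

/-- Decoupling estimate for a potential homogeneous of degree 6. -/
theorem stmt16 (m : ℕ) (hm : 1 ≤ m)
    (F : EuclideanSpace ℝ (Fin m) → ℝ)
    (hF : ContDiff ℝ 1 F)
    (hhom : ∀ c : ℝ, 0 ≤ c → ∀ x, F (c • x) = c ^ 6 * F x) :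
    ∀ J : ℕ, 1 ≤ J → ∃ C : ℝ, 0 < C ∧
      ∀ z : Fin J → EuclideanSpace ℝ (Fin m),
        |F (∑ j, z j) - ∑ j, F (z j)|
          ≤ C * ∑ j : Fin J, ∑ k : Fin J, if j ≠ k then ‖z j‖ * ‖z k‖ ^ 5 else 0 := by
  intro J hJ
  have hF0 : F 0 = 0 := by
    have h := hhom 0 le_rfl 0
    simpa using h
  obtain ⟨A0, hA0⟩ := (isCompact_closedBall (0 : EuclideanSpace ℝ (Fin m)) 1).exists_bound_of_continuousOn
    hF.continuous.continuousOn
  obtain ⟨B0, hB0⟩ := (isCompact_closedBall (0 : EuclideanSpace ℝ (Fin m)) 1).exists_bound_of_continuousOn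
    (hF.continuous_fderiv one_ne_zero).continuousOn
  set A := max A0 0 with hAdef
  set B := max B0 0 with hBdef
  have hApos : 0 ≤ A := le_max_right _ _
  have hBpos : 0 ≤ B := le_max_right _ _
  have hA : ∀ x ∈ Metric.closedBall (0 : EuclideanSpace ℝ (Fin m)) 1, |F x| ≤ A :=
    fun x hx => le_trans (by simpa using hA0 x hx) (le_max_left _ _)
  have hB : ∀ x ∈ Metric.closedBall (0 : EuclideanSpace ℝ (Fin m)) 1, ‖fderiv ℝ F x‖ ≤ B :=
    fun x hx => le_trans (hB0 x hx) (le_max_left _ _)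
  -- pointwise bound
  have hAx : ∀ x : EuclideanSpace ℝ (Fin m), |F x| ≤ A * ‖x‖ ^ 6 := by
    intro x
    rcases eq_or_ne x 0 with rfl | hx
    · simp [hF0]
    · have hn : 0 < ‖x‖ := norm_pos_iff.mpr hx
      have hu : ‖(‖x‖⁻¹ • x : EuclideanSpace ℝ (Fin m))‖ = 1 := by
        rw [norm_smul, norm_inv, norm_norm, inv_mul_cancel₀ hn.ne']
      have hxeq : (‖x‖ : ℝ) • (‖x‖⁻¹ • x) = x := by
        rw [smul_smul, mul_inv_cancel₀ hn.ne', one_smul]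
      have h := hhom ‖x‖ hn.le (‖x‖⁻¹ • x)
      rw [hxeq] at h
      rw [h, abs_mul, abs_pow, abs_norm]
      have hmem : (‖x‖⁻¹ • x : EuclideanSpace ℝ (Fin m)) ∈
          Metric.closedBall (0 : EuclideanSpace ℝ (Fin m)) 1 := by
        simp [hu]
      calc ‖x‖ ^ 6 * |F (‖x‖⁻¹ • x)| ≤ ‖x‖ ^ 6 * A :=
            mul_le_mul_of_nonneg_left (hA _ hmem) (by positivity)
        _ = A * ‖x‖ ^ 6 := by ring
  -- Lipschitz-type bound
  have hLip : ∀ R : ℝ, 0 < R → ∀ x y : EuclideanSpace ℝ (Fin m), ‖x‖ ≤ R → ‖y‖ ≤ R →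
      |F x - F y| ≤ B * R ^ 5 * ‖x - y‖ := by
    intro R hR x y hx hy
    set u : EuclideanSpace ℝ (Fin m) := R⁻¹ • x with hu
    set v : EuclideanSpace ℝ (Fin m) := R⁻¹ • y with hv
    have hum : u ∈ Metric.closedBall (0 : EuclideanSpace ℝ (Fin m)) 1 := by
      rw [Metric.mem_closedBall, dist_zero_right, hu, norm_smul, norm_inv,
        Real.norm_of_nonneg hR.le]
      calc R⁻¹ * ‖x‖ ≤ R⁻¹ * R :=
            mul_le_mul_of_nonneg_left hx (inv_nonneg.mpr hR.le)
        _ = 1 := inv_mul_cancel₀ hR.ne'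
    have hvm : v ∈ Metric.closedBall (0 : EuclideanSpace ℝ (Fin m)) 1 := by
      rw [Metric.mem_closedBall, dist_zero_right, hv, norm_smul, norm_inv,
        Real.norm_of_nonneg hR.le]
      calc R⁻¹ * ‖y‖ ≤ R⁻¹ * R :=
            mul_le_mul_of_nonneg_left hy (inv_nonneg.mpr hR.le)
        _ = 1 := inv_mul_cancel₀ hR.ne'
    have hmvt : ‖F u - F v‖ ≤ B * ‖u - v‖ :=
      (convex_closedBall (0 : EuclideanSpace ℝ (Fin m)) 1).norm_image_sub_le_of_norm_fderiv_le
        (fun w _ => (hF.differentiable one_ne_zero).differentiableAt) hB hvm hum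
    have hxu : (R : ℝ) • u = x := by rw [hu, smul_smul, mul_inv_cancel₀ hR.ne', one_smul]
    have hyv : (R : ℝ) • v = y := by rw [hv, smul_smul, mul_inv_cancel₀ hR.ne', one_smul]
    have hFx : F x = R ^ 6 * F u := by rw [← hxu]; exact hhom R hR.le u
    have hFy : F y = R ^ 6 * F v := by rw [← hyv]; exact hhom R hR.le v
    have huv : ‖u - v‖ = R⁻¹ * ‖x - y‖ := by
      rw [hu, hv, ← smul_sub, norm_smul, norm_inv, Real.norm_of_nonneg hR.le]
    calc |F x - F y| = R ^ 6 * ‖F u - F v‖ := by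
          rw [hFx, hFy, ← mul_sub, abs_mul, abs_pow, abs_of_nonneg hR.le]; rfl
      _ ≤ R ^ 6 * (B * ‖u - v‖) :=
          mul_le_mul_of_nonneg_left hmvt (by positivity)
      _ = B * R ^ 5 * ‖x - y‖ := by
          rw [huv]; field_simp
  -- constant
  have hJ0 : (0 : ℝ) < (J : ℝ) := by exact_mod_cast hJ
  have hJ1 : (1 : ℝ) ≤ (J : ℝ) := by exact_mod_cast hJ
  refine ⟨(A + B + 1) * (J : ℝ) ^ 5, by positivity, ?_⟩
  intro z
  obtain ⟨j₀, -, hj₀⟩ := Finset.exists_max_image Finset.univ (fun j => ‖z j‖)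
    ⟨⟨0, hJ⟩, Finset.mem_univ _⟩
  set M := ‖z j₀‖ with hMdef
  have hM : ∀ j, ‖z j‖ ≤ M := fun j => hj₀ j (Finset.mem_univ j)
  have hM0 : 0 ≤ M := norm_nonneg _
  -- RHS sum is nonnegative and dominates the key quantity
  set S := ∑ j : Fin J, ∑ k : Fin J, if j ≠ k then ‖z j‖ * ‖z k‖ ^ 5 else 0 with hSdef
  have hSnn : 0 ≤ S := by
    apply Finset.sum_nonneg; intro j _
    apply Finset.sum_nonneg; intro k _
    split <;> positivity
  set T := ∑ j ∈ Finset.univ.erase j₀, ‖z j‖ with hTdef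
  have hTnn : 0 ≤ T := Finset.sum_nonneg fun j _ => norm_nonneg _
  have hTS : T * M ^ 5 ≤ S := by
    have h1 : T * M ^ 5 = ∑ j ∈ Finset.univ.erase j₀,
        (if j ≠ j₀ then ‖z j‖ * ‖z j₀‖ ^ 5 else 0) := by
      rw [hTdef, Finset.sum_mul]
      apply Finset.sum_congr rfl
      intro j hj
      rw [if_pos (Finset.ne_of_mem_erase hj)]
    have h2 : ∑ j ∈ Finset.univ.erase j₀,
        (if j ≠ j₀ then ‖z j‖ * ‖z j₀‖ ^ 5 else 0) ≤
        ∑ j : Fin J, (if j ≠ j₀ then ‖z j‖ * ‖z j₀‖ ^ 5 else 0) := by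
      apply Finset.sum_le_sum_of_subset_of_nonneg (Finset.erase_subset _ _)
      intro k _ _
      split <;> positivity
    have h3 : ∑ j : Fin J, (if j ≠ j₀ then ‖z j‖ * ‖z j₀‖ ^ 5 else 0) ≤ S := by
      rw [hSdef]
      apply Finset.sum_le_sum
      intro j _
      apply Finset.single_le_sum (f := fun k => if j ≠ k then ‖z j‖ * ‖z k‖ ^ 5 else 0)
        (fun k _ => by split <;> positivity) (Finset.mem_univ j₀)
    rw [h1]; exact h2.trans h3
  by_cases hMz : M = 0
  · have hz : ∀ j, z j = 0 := fun j => norm_le_zero_iff.mp (hMz ▸ hM j)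
    have h0 : (∑ j, z j) = 0 := by simp [hz]
    have hLHS : |F (∑ j, z j) - ∑ j, F (z j)| = 0 := by simp [h0, hF0, hz]
    rw [hLHS]
    exact mul_nonneg (by positivity) hSnn
  · have hMpos : 0 < M := lt_of_le_of_ne hM0 (Ne.symm hMz)
    -- split off the j₀ term
    have hsum_split : ∑ j, F (z j) = F (z j₀) + ∑ j ∈ Finset.univ.erase j₀, F (z j) := by
      rw [Finset.sum_erase_eq_sub (Finset.mem_univ j₀)]; ring
    have hvec_split : (∑ j, z j) - z j₀ = ∑ j ∈ Finset.univ.erase j₀, z j := by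
      rw [Finset.sum_erase_eq_sub (Finset.mem_univ j₀)]
    -- bound 1
    have hnorm_sum : ‖∑ j, z j‖ ≤ (J : ℝ) * M := by
      calc ‖∑ j, z j‖ ≤ ∑ j, ‖z j‖ := norm_sum_le _ _
        _ ≤ ∑ _j : Fin J, M := Finset.sum_le_sum fun j _ => hM j
        _ = (J : ℝ) * M := by simp [mul_comm]
    have hnorm_j₀ : ‖z j₀‖ ≤ (J : ℝ) * M := by
      rw [← hMdef]
      nlinarith
    have key1 : |F (∑ j, z j) - F (z j₀)| ≤ B * (J : ℝ) ^ 5 * (T * M ^ 5) := by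
      have h := hLip ((J : ℝ) * M) (by positivity) (∑ j, z j) (z j₀) hnorm_sum hnorm_j₀
      have hd : ‖(∑ j, z j) - z j₀‖ ≤ T := by
        rw [hvec_split]
        exact (norm_sum_le _ _)
      calc |F (∑ j, z j) - F (z j₀)| ≤ B * ((J : ℝ) * M) ^ 5 * ‖(∑ j, z j) - z j₀‖ := h
        _ ≤ B * ((J : ℝ) * M) ^ 5 * T := by
            apply mul_le_mul_of_nonneg_left hd (by positivity)
        _ = B * (J : ℝ) ^ 5 * (T * M ^ 5) := by ring
    -- bound 2
    have key2 : |∑ j ∈ Finset.univ.erase j₀, F (z j)| ≤ A * (T * M ^ 5) := by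
      calc |∑ j ∈ Finset.univ.erase j₀, F (z j)|
          ≤ ∑ j ∈ Finset.univ.erase j₀, |F (z j)| := Finset.abs_sum_le_sum_abs _ _
        _ ≤ ∑ j ∈ Finset.univ.erase j₀, A * (‖z j‖ * M ^ 5) := by
            apply Finset.sum_le_sum
            intro j _
            calc |F (z j)| ≤ A * ‖z j‖ ^ 6 := hAx (z j)
              _ ≤ A * (‖z j‖ * M ^ 5) := by
                  have h6 : ‖z j‖ ^ 6 ≤ ‖z j‖ * M ^ 5 := by
                    have := hM j
                    have h5 : ‖z j‖ ^ 5 ≤ M ^ 5 :=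
                      pow_le_pow_left₀ (norm_nonneg _) (hM j) 5
                    calc ‖z j‖ ^ 6 = ‖z j‖ * ‖z j‖ ^ 5 := by ring
                      _ ≤ ‖z j‖ * M ^ 5 :=
                        mul_le_mul_of_nonneg_left h5 (norm_nonneg _)
                  exact mul_le_mul_of_nonneg_left h6 hApos
        _ = A * (T * M ^ 5) := by rw [hTdef, Finset.sum_mul, Finset.mul_sum]
    -- combine
    calc |F (∑ j, z j) - ∑ j, F (z j)|
        = |(F (∑ j, z j) - F (z j₀)) - ∑ j ∈ Finset.univ.erase j₀, F (z j)| := by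
          rw [hsum_split]; ring_nf
      _ ≤ |F (∑ j, z j) - F (z j₀)| + |∑ j ∈ Finset.univ.erase j₀, F (z j)| :=
          abs_sub _ _
      _ ≤ B * (J : ℝ) ^ 5 * (T * M ^ 5) + A * (T * M ^ 5) := add_le_add key1 key2
      _ = (B * (J : ℝ) ^ 5 + A) * (T * M ^ 5) := by ring
      _ ≤ ((A + B + 1) * (J : ℝ) ^ 5) * (T * M ^ 5) := by
          apply mul_le_mul_of_nonneg_right _ (mul_nonneg hTnn (by positivity))
          nlinarith [one_le_pow₀ hJ1 (n := 5), hApos, hBpos]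
      _ ≤ ((A + B + 1) * (J : ℝ) ^ 5) * S := by
          apply mul_le_mul_of_nonneg_left hTS (by positivity)
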